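/- arXiv:1405.2855 — 2 statements merged into one kernel-verified Lean document; each statement's English description precedes it below -/
import Mathlib

section
/- For any integers m, t and r satisfying C(t−1,r) ≤ m ≤ C(t−1,r) + C(t−2,r−1), the Lagrangian of C_{r,m} equals the Lagrangian of the complete r-graph [t−1]^{(r)}: λ(C_{r,m}) = λ([t−1]^{(r)}). -/
/-- `lagEval E x` is λ(G,x): the sum over the edges of `E` of the product of the
weights (under `x`) of their vertices. -/
def lagEval (E : Finset (Finset ℕ)) (x : ℕ → ℝ) : ℝ :=
  ∑ e ∈ E, ∏ i ∈ e, x i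

/-- A feasible weighting: nonnegative entries, finitely supported, total weight 1. -/
def Feasible (x : ℕ → ℝ) : Prop :=
  (∀ i, 0 ≤ x i) ∧ ∃ S : Finset ℕ, (∀ i ∉ S, x i = 0) ∧ ∑ i ∈ S, x i = 1

/-- A feasible weighting on the vertex set [n] = {1,…,n}. -/
def FeasibleOn (n : ℕ) (x : ℕ → ℝ) : Prop :=
  (∀ i, 0 ≤ x i) ∧ (∀ i ∉ Finset.Icc 1 n, x i = 0) ∧ ∑ i ∈ Finset.Icc 1 n, x i = 1

/-- The Lagrangian λ(G) of a hypergraph with edge set `E`: the supremum (in fact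
maximum) of λ(G,x) over all feasible weightings `x`. -/
noncomputable def lagrangian (E : Finset (Finset ℕ)) : ℝ :=
  sSup {y : ℝ | ∃ x : ℕ → ℝ, Feasible x ∧ lagEval E x = y}

/-- `completeG s r` is [s]^{(r)}, the complete r-graph on {1,…,s}. -/
def completeG (s r : ℕ) : Finset (Finset ℕ) :=
  (Finset.Icc 1 s).powersetCard r

/-- `E` is (the edge set of) an r-graph on the vertex set [n] = {1,…,n}. -/
def IsRGraphOn (r n : ℕ) (E : Finset (Finset ℕ)) : Prop :=
  ∀ e ∈ E, e.card = r ∧ e ⊆ Finset.Icc 1 n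

/-- The r-graph `E` contains a clique of order `s` (inside the vertex set `V`):
some `s`-element subset of `V` has all of its `r`-element subsets as edges. -/
def ContainsCliqueOn (V : Finset ℕ) (r s : ℕ) (E : Finset (Finset ℕ)) : Prop :=
  ∃ S : Finset ℕ, S ⊆ V ∧ S.card = s ∧ S.powersetCard r ⊆ E

/-- `DomLE A B`: `A` and `B` have the same size and, listing both in increasing
order as `i_1 < ⋯ < i_r` and `j_1 < ⋯ < j_r`, one has `i_k ≤ j_k` for all `k`
(equivalently, for every threshold `c`, `A` has at most as many elements above `c`
as `B`). -/
def DomLE (A B : Finset ℕ) : Prop :=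
  A.card = B.card ∧
    ∀ c : ℕ, (A.filter fun a => c < a).card ≤ (B.filter fun b => c < b).card

/-- `E` is left-compressed: together with any edge it contains every set of positive
integers dominating it from the left. -/
def LeftCompressed (E : Finset (Finset ℕ)) : Prop :=
  ∀ B ∈ E, ∀ A : Finset ℕ, (∀ a ∈ A, 1 ≤ a) → DomLE A B → A ∈ E

/-- `nbhd E i` is E_i, the (r-1)-neighborhood of the vertex `i`:
all sets `A` with `i ∉ A` and `A ∪ {i} ∈ E`. -/
def nbhd (E : Finset (Finset ℕ)) (i : ℕ) : Finset (Finset ℕ) :=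
  (E.filter fun e => i ∈ e).image fun e => e.erase i

/-- `nbhd2 E i j` is E_{ij}, the (r-2)-neighborhood of the pair of vertices `i, j`. -/
def nbhd2 (E : Finset (Finset ℕ)) (i j : ℕ) : Finset (Finset ℕ) :=
  (E.filter fun e => i ∈ e ∧ j ∈ e).image fun e => (e.erase i).erase j

/-- `C` consists of the first `m` r-element subsets of {1,2,3,…} in the colex
ordering: it has `m` edges, all of them r-element sets of positive integers, and it
is an initial segment for the colex order. -/
def IsColexSegment (r m : ℕ) (C : Finset (Finset ℕ)) : Prop :=
  C.card = m ∧ (∀ e ∈ C, e.card = r ∧ ∀ a ∈ e, 1 ≤ a) ∧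
    ∀ A B : Finset ℕ, A.card = r → (∀ a ∈ A, 1 ≤ a) → B ∈ C →
      toColex A < toColex B → A ∈ C

section LagAux

open Finset

lemma feas_le_one {x : ℕ → ℝ} (hx : Feasible x) (i : ℕ) : x i ≤ 1 := by
  obtain ⟨hnn, S, hS0, hS1⟩ := hx
  by_cases hi : i ∈ S
  · calc x i ≤ ∑ j ∈ S, x j := Finset.single_le_sum (fun j _ => hnn j) hi
    _ = 1 := hS1
  · rw [hS0 i hi]; norm_num

lemma lag_bdd (E : Finset (Finset ℕ)) :
    BddAbove {y : ℝ | ∃ x : ℕ → ℝ, Feasible x ∧ lagEval E x = y} := by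
  refine ⟨E.card, fun y ⟨x, hx, hy⟩ => ?_⟩
  subst hy
  calc lagEval E x ≤ ∑ _e ∈ E, (1:ℝ) := by
        refine Finset.sum_le_sum fun e _ => ?_
        exact Finset.prod_le_one (fun i _ => hx.1 i) (fun i _ => feas_le_one hx i)
    _ = E.card := by simp

lemma lag_nonempty (E : Finset (Finset ℕ)) :
    Set.Nonempty {y : ℝ | ∃ x : ℕ → ℝ, Feasible x ∧ lagEval E x = y} := by
  refine ⟨lagEval E (fun i => if i = 1 then 1 else 0), fun i => if i = 1 then 1 else 0, ?_, rfl⟩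
  refine ⟨fun i => by positivity, {1}, fun i hi => ?_, by simp⟩
  simp only [Finset.mem_singleton] at hi
  simp [hi]

lemma lagEval_mono {E F : Finset (Finset ℕ)} (h : E ⊆ F) {x : ℕ → ℝ} (hx : ∀ i, 0 ≤ x i) :
    lagEval E x ≤ lagEval F x :=
  Finset.sum_le_sum_of_subset_of_nonneg h fun e _ _ => Finset.prod_nonneg fun i _ => hx i

lemma lagrangian_mono {E F : Finset (Finset ℕ)} (h : E ⊆ F) : lagrangian E ≤ lagrangian F := by
  refine csSup_le (lag_nonempty E) fun y ⟨x, hx, hy⟩ => ?_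
  subst hy
  exact (lagEval_mono h hx.1).trans (le_csSup (lag_bdd F) ⟨x, hx, rfl⟩)

lemma lt_colex_of_bound {d e : Finset ℕ} {b : ℕ} (hb : b ∈ e) (hbd : b ∉ d)
    (h : ∀ a ∈ d, a ∉ e → a ≤ b) : toColex d < toColex e := by
  rw [Finset.Colex.toColex_lt_toColex]
  exact ⟨(ne_of_mem_of_not_mem' hb hbd).symm, fun a ha hae => ⟨b, hb, hbd, h a ha hae⟩⟩

lemma complete_subset_colex (m t r : ℕ) (ht : 2 ≤ t)
    (h1 : (t - 1).choose r ≤ m) (C : Finset (Finset ℕ)) (hC : IsColexSegment r m C) :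
    completeG (t - 1) r ⊆ C := by
  obtain ⟨hcard, hmem, hclose⟩ := hC
  intro e he
  by_contra hec
  rw [completeG, Finset.mem_powersetCard] at he
  obtain ⟨hesub, hecard⟩ := he
  have hepos : ∀ a ∈ e, 1 ≤ a := fun a ha => (Finset.mem_Icc.1 (hesub ha)).1
  have hsub : C ⊆ (completeG (t - 1) r).erase e := by
    intro B hB
    obtain ⟨hBcard, hBpos⟩ := hmem B hB
    have hlt : toColex B < toColex e := by
      rcases lt_trichotomy (toColex B) (toColex e) with h | h | h
      · exact h
      · exact absurd ((toColex.injective h) ▸ hB) hec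
      · exact absurd (hclose e B hecard hepos hB h) hec
    rw [Finset.Colex.toColex_lt_toColex] at hlt
    obtain ⟨hne, hdom⟩ := hlt
    refine Finset.mem_erase.2 ⟨hne, Finset.mem_powersetCard.2 ⟨?_, hBcard⟩⟩
    intro a ha
    refine Finset.mem_Icc.2 ⟨hBpos a ha, ?_⟩
    by_cases hae : a ∈ e
    · exact (Finset.mem_Icc.1 (hesub hae)).2
    · obtain ⟨c, hce, _, hac⟩ := hdom ha hae
      exact hac.trans (Finset.mem_Icc.1 (hesub hce)).2
  have hmemK : e ∈ completeG (t - 1) r := Finset.mem_powersetCard.2 ⟨hesub, hecard⟩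
  have h6 := Finset.card_le_card hsub
  rw [Finset.card_erase_of_mem hmemK, hcard] at h6
  have h4 : (completeG (t - 1) r).card = (t - 1).choose r := by
    rw [completeG, Finset.card_powersetCard, Nat.card_Icc]; simp
  have h5 : 1 ≤ (completeG (t - 1) r).card := Finset.card_pos.2 ⟨e, hmemK⟩
  omega

lemma colex_subset_D (m t r : ℕ) (hr : 1 ≤ r) (ht : 2 ≤ t)
    (h2 : m ≤ (t - 1).choose r + (t - 2).choose (r - 1))
    (C : Finset (Finset ℕ)) (hC : IsColexSegment r m C) :
    C ⊆ completeG (t - 1) r ∪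
      ((Finset.Icc 1 (t - 2)).powersetCard (r - 1)).image (insert t) := by
  obtain ⟨hcard, hmem, hclose⟩ := hC
  set K := completeG (t - 1) r with hK
  set P := (Finset.Icc 1 (t - 2)).powersetCard (r - 1) with hP
  set D := K ∪ P.image (insert t) with hD
  have hKfact : ∀ d ∈ K, d.card = r ∧ ∀ a ∈ d, 1 ≤ a ∧ a ≤ t - 1 := by
    intro d hd
    rw [hK, completeG, Finset.mem_powersetCard] at hd
    exact ⟨hd.2, fun a ha => Finset.mem_Icc.1 (hd.1 ha)⟩
  have hIfact : ∀ d ∈ P.image (insert t),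
      d.card = r ∧ t ∈ d ∧ (t - 1) ∉ d ∧ ∀ a ∈ d, 1 ≤ a ∧ a ≤ t := by
    intro d hd
    rw [Finset.mem_image] at hd
    obtain ⟨A, hA, rfl⟩ := hd
    rw [hP, Finset.mem_powersetCard] at hA
    have htA : t ∉ A := by
      intro h
      have := (Finset.mem_Icc.1 (hA.1 h)).2
      omega
    have ht1A : t - 1 ∉ A := by
      intro h
      have := (Finset.mem_Icc.1 (hA.1 h)).2
      omega
    refine ⟨?_, Finset.mem_insert_self _ _, ?_, ?_⟩
    · rw [Finset.card_insert_of_notMem htA, hA.2]; omega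
    · simp only [Finset.mem_insert]
      push_neg
      exact ⟨by omega, ht1A⟩
    · intro a ha
      rcases Finset.mem_insert.1 ha with rfl | h
      · omega
      · have := Finset.mem_Icc.1 (hA.1 h); omega
  intro e he
  by_contra heD
  have heK : e ∉ K := fun h => heD (Finset.mem_union_left _ h)
  have heI : e ∉ P.image (insert t) := fun h => heD (Finset.mem_union_right _ h)
  obtain ⟨hecard, hepos⟩ := hmem e he
  have hbig : ∃ b ∈ e, t ≤ b := by
    by_contra h
    push_neg at h
    exact heK (Finset.mem_powersetCard.2
      ⟨fun a ha => Finset.mem_Icc.2 ⟨hepos a ha, by have := h a ha; omega⟩, hecard⟩)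
  have hkey : ∀ d ∈ D, toColex d < toColex e := by
    by_cases hA : ∃ b ∈ e, t < b
    · obtain ⟨b, hb, htb⟩ := hA
      intro d hd
      rcases Finset.mem_union.1 hd with hd | hd
      · have := hKfact d hd
        exact lt_colex_of_bound hb (fun h => by have := (this.2 b h).2; omega)
          (fun a ha _ => by have := (this.2 a ha).2; omega)
      · have := hIfact d hd
        exact lt_colex_of_bound hb (fun h => by have := (this.2.2.2 b h).2; omega)
          (fun a ha _ => by have := (this.2.2.2 a ha).2; omega)
    · push_neg at hA
      obtain ⟨b, hb, htb⟩ := hbig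
      have hbt : b = t := le_antisymm (hA b hb) htb
      have hte : t ∈ e := hbt ▸ hb
      clear hbt htb hb
      have ht1e : t - 1 ∈ e := by
        by_contra ht1
        apply heI
        rw [Finset.mem_image]
        refine ⟨e.erase t, ?_, ?_⟩
        · rw [hP, Finset.mem_powersetCard]
          constructor
          · intro a ha
            have ha' := Finset.mem_erase.1 ha
            have h1 := hepos a ha'.2
            have h2 := hA a ha'.2
            refine Finset.mem_Icc.2 ⟨h1, ?_⟩
            have : a ≠ t - 1 := fun h => ht1 (h ▸ ha'.2)
            omega
          · rw [Finset.card_erase_of_mem hte, hecard]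
        · exact Finset.insert_erase hte
      intro d hd
      rcases Finset.mem_union.1 hd with hd | hd
      · have := hKfact d hd
        exact lt_colex_of_bound hte (fun h => by have := (this.2 t h).2; omega)
          (fun a ha _ => by have := (this.2 a ha).2; omega)
      · obtain ⟨_, htd, ht1d, hbound⟩ := hIfact d hd
        refine lt_colex_of_bound ht1e ht1d ?_
        intro a ha hae
        have hat : a ≠ t := fun h => hae (h ▸ hte)
        have := (hbound a ha).2
        omega
  have hDC : insert e D ⊆ C := by
    intro d hd
    rcases Finset.mem_insert.1 hd with rfl | hd
    · exact he
    · rcases Finset.mem_union.1 hd with hd' | hd'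
      · have h := hKfact d hd'
        exact hclose d e h.1 (fun a ha => (h.2 a ha).1) he (hkey d hd)
      · have h := hIfact d hd'
        exact hclose d e h.1 (fun a ha => (h.2.2.2 a ha).1) he (hkey d hd)
  have hdisj : Disjoint K (P.image (insert t)) := by
    rw [Finset.disjoint_left]
    intro d hdK hdI
    have h1 := (hKfact d hdK).2 t ((hIfact d hdI).2.1)
    omega
  have hinj : Set.InjOn (insert t) (P : Set (Finset ℕ)) := by
    intro A hA B hB h
    rw [Finset.mem_coe, hP, Finset.mem_powersetCard] at hA hB
    have htA : t ∉ A := fun hh => by have := (Finset.mem_Icc.1 (hA.1 hh)).2; omega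
    have htB : t ∉ B := fun hh => by have := (Finset.mem_Icc.1 (hB.1 hh)).2; omega
    rw [← Finset.erase_insert htA, ← Finset.erase_insert htB, h]
  have hcardD : D.card = (t - 1).choose r + (t - 2).choose (r - 1) := by
    rw [hD, Finset.card_union_of_disjoint hdisj, Finset.card_image_of_injOn hinj,
      hK, completeG, Finset.card_powersetCard, Nat.card_Icc,
      hP, Finset.card_powersetCard, Nat.card_Icc]
    simp
  have heD' : e ∉ D := heD
  have := Finset.card_le_card hDC
  rw [Finset.card_insert_of_notMem heD', hcardD, hcard] at this
  omega

lemma merge_lemma (t r : ℕ) (hr : 1 ≤ r) (ht : 2 ≤ t) (x : ℕ → ℝ) (hx : Feasible x) :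
    ∃ z : ℕ → ℝ, Feasible z ∧
      lagEval (completeG (t - 1) r ∪
        ((Finset.Icc 1 (t - 2)).powersetCard (r - 1)).image (insert t)) x
      = lagEval (completeG (t - 1) r) z := by
  set K := completeG (t - 1) r with hK
  set P := (Finset.Icc 1 (t - 2)).powersetCard (r - 1) with hP
  have hne : t - 1 ≠ t := by omega
  have hne' : t ≠ t - 1 := by omega
  set z : ℕ → ℝ := Function.update (Function.update x t 0) (t - 1) (x (t - 1) + x t) with hzdef
  have hz1 : z (t - 1) = x (t - 1) + x t := by rw [hzdef]; simp
  have hzt : z t = 0 := by rw [hzdef, Function.update_of_ne hne', Function.update_self]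
  have hz2 : ∀ i, i ≠ t - 1 → i ≠ t → z i = x i := by
    intro i h1 h2
    rw [hzdef, Function.update_of_ne h1, Function.update_of_ne h2]
  have hPfact : ∀ A ∈ P, (t - 1) ∉ A ∧ t ∉ A ∧ A.card = r - 1 := by
    intro A hA
    rw [hP, Finset.mem_powersetCard] at hA
    refine ⟨fun h => ?_, fun h => ?_, hA.2⟩
    · have := (Finset.mem_Icc.1 (hA.1 h)).2; omega
    · have := (Finset.mem_Icc.1 (hA.1 h)).2; omega
  have hKfact : ∀ e ∈ K, e.card = r ∧ ∀ a ∈ e, 1 ≤ a ∧ a ≤ t - 1 := by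
    intro e he
    rw [hK, completeG, Finset.mem_powersetCard] at he
    exact ⟨he.2, fun a ha => Finset.mem_Icc.1 (he.1 ha)⟩
  obtain ⟨hnn, S, hS0, hS1⟩ := hx
  have hzfeas : Feasible z := by
    constructor
    · intro i
      by_cases h1 : i = t - 1
      · rw [h1, hz1]; exact add_nonneg (hnn _) (hnn _)
      · by_cases h2 : i = t
        · rw [h2, hzt]
        · rw [hz2 i h1 h2]; exact hnn i
    · refine ⟨insert (t - 1) (insert t S), fun i hi => ?_, ?_⟩
      · simp only [Finset.mem_insert, not_or] at hi
        rw [hz2 i hi.1 hi.2.1]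
        exact hS0 i hi.2.2
      · set T := insert (t - 1) (insert t S) with hT
        have hxT : ∑ i ∈ T, x i = 1 := by
          rw [← hS1]
          exact (Finset.sum_subset (by intro i hi; simp [hT, hi]) fun i _ hiS => hS0 i hiS).symm
        have ht1T : t - 1 ∈ T := Finset.mem_insert_self _ _
        have htT : t ∈ T.erase (t - 1) := Finset.mem_erase.2 ⟨hne', by simp [hT]⟩
        have e1 : ∀ f : ℕ → ℝ, ∑ i ∈ T, f i
            = f (t - 1) + (f t + ∑ i ∈ (T.erase (t - 1)).erase t, f i) := by
          intro f
          rw [← Finset.add_sum_erase _ f ht1T, ← Finset.add_sum_erase _ f htT]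
        have e2 : ∑ i ∈ (T.erase (t - 1)).erase t, z i
            = ∑ i ∈ (T.erase (t - 1)).erase t, x i := by
          refine Finset.sum_congr rfl fun i hi => ?_
          rw [Finset.mem_erase, Finset.mem_erase] at hi
          exact hz2 i hi.2.1 hi.1
        rw [e1 z, e2, hz1, hzt]
        rw [e1 x] at hxT
        linarith
  refine ⟨z, hzfeas, ?_⟩
  have hinjt : Set.InjOn (insert t) (P : Set (Finset ℕ)) := by
    intro A hA B hB h
    have h1 := (hPfact A (Finset.mem_coe.1 hA)).2.1
    have h2 := (hPfact B (Finset.mem_coe.1 hB)).2.1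
    rw [← Finset.erase_insert h1, ← Finset.erase_insert h2, h]
  have hinjt1 : Set.InjOn (insert (t - 1)) (P : Set (Finset ℕ)) := by
    intro A hA B hB h
    have h1 := (hPfact A (Finset.mem_coe.1 hA)).1
    have h2 := (hPfact B (Finset.mem_coe.1 hB)).1
    rw [← Finset.erase_insert h1, ← Finset.erase_insert h2, h]
  have hdisj : Disjoint K (P.image (insert t)) := by
    rw [Finset.disjoint_left]
    intro d hdK hdI
    rw [Finset.mem_image] at hdI
    obtain ⟨A, hA, rfl⟩ := hdI
    have := (hKfact _ hdK).2 t (Finset.mem_insert_self _ _)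
    omega
  have himg : K.filter (fun e => (t - 1) ∈ e) = P.image (insert (t - 1)) := by
    ext e
    simp only [Finset.mem_filter, Finset.mem_image]
    constructor
    · rintro ⟨heK, ht1e⟩
      refine ⟨e.erase (t - 1), ?_, Finset.insert_erase ht1e⟩
      rw [hP, Finset.mem_powersetCard]
      obtain ⟨hecard, hbound⟩ := hKfact e heK
      constructor
      · intro a ha
        have ha' := Finset.mem_erase.1 ha
        have h := hbound a ha'.2
        exact Finset.mem_Icc.2 ⟨h.1, by have := ha'.1; omega⟩
      · rw [Finset.card_erase_of_mem ht1e, hecard]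
    · rintro ⟨A, hA, rfl⟩
      obtain ⟨ht1A, htA, hAcard⟩ := hPfact A hA
      constructor
      · rw [hK, completeG, Finset.mem_powersetCard]
        constructor
        · intro a ha
          rcases Finset.mem_insert.1 ha with rfl | h
          · exact Finset.mem_Icc.2 ⟨by omega, le_refl _⟩
          · rw [hP, Finset.mem_powersetCard] at hA
            have := Finset.mem_Icc.1 (hA.1 h)
            exact Finset.mem_Icc.2 ⟨this.1, by omega⟩
        · rw [Finset.card_insert_of_notMem ht1A, hAcard]; omega
      · exact Finset.mem_insert_self _ _
  have hprodz : ∀ A ∈ P, ∏ i ∈ insert (t - 1) A, z i = (x (t - 1) + x t) * ∏ i ∈ A, x i := by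
    intro A hA
    obtain ⟨ht1A, htA, _⟩ := hPfact A hA
    rw [Finset.prod_insert ht1A, hz1]
    congr 1
    exact Finset.prod_congr rfl fun i hi =>
      hz2 i (fun h => ht1A (h ▸ hi)) (fun h => htA (h ▸ hi))
  have hprodx : ∀ A ∈ P, ∏ i ∈ insert (t - 1) A, x i = x (t - 1) * ∏ i ∈ A, x i := by
    intro A hA
    rw [Finset.prod_insert (hPfact A hA).1]
  have hprodt : ∀ A ∈ P, ∏ i ∈ insert t A, x i = x t * ∏ i ∈ A, x i := by
    intro A hA
    rw [Finset.prod_insert (hPfact A hA).2.1]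
  have hnotz : ∑ e ∈ K.filter (fun e => ¬ (t - 1) ∈ e), ∏ i ∈ e, z i
      = ∑ e ∈ K.filter (fun e => ¬ (t - 1) ∈ e), ∏ i ∈ e, x i := by
    refine Finset.sum_congr rfl fun e he => ?_
    rw [Finset.mem_filter] at he
    refine Finset.prod_congr rfl fun i hi => ?_
    have hb := (hKfact e he.1).2 i hi
    exact hz2 i (fun h => he.2 (h ▸ hi)) (fun h => by omega)
  show (∑ e ∈ K ∪ P.image (insert t), ∏ i ∈ e, x i) = ∑ e ∈ K, ∏ i ∈ e, z i
  rw [Finset.sum_union hdisj,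
    ← Finset.sum_filter_add_sum_filter_not K (fun e => (t - 1) ∈ e) (fun e => ∏ i ∈ e, x i),
    ← Finset.sum_filter_add_sum_filter_not K (fun e => (t - 1) ∈ e) (fun e => ∏ i ∈ e, z i),
    hnotz, himg, Finset.sum_image (fun A hA B hB h => hinjt1 hA hB h),
    Finset.sum_image (fun A hA B hB h => hinjt1 hA hB h),
    Finset.sum_image (fun A hA B hB h => hinjt hA hB h),
    Finset.sum_congr rfl hprodz, Finset.sum_congr rfl hprodx, Finset.sum_congr rfl hprodt,
    ← Finset.mul_sum, ← Finset.mul_sum, ← Finset.mul_sum]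
  ring

end LagAux

/-- For `C(t−1,r) ≤ m ≤ C(t−1,r) + C(t−2,r−1)`, the Lagrangian of `C_{r,m}` (the
first `m` r-sets in colex order) equals the Lagrangian of `[t−1]^{(r)}`. -/
theorem stmt2 (m t r : ℕ) (hr : 1 ≤ r) (ht : 2 ≤ t)
    (h1 : (t - 1).choose r ≤ m)
    (h2 : m ≤ (t - 1).choose r + (t - 2).choose (r - 1))
    (C : Finset (Finset ℕ)) (hC : IsColexSegment r m C) :
    lagrangian C = lagrangian (completeG (t - 1) r) := by
  have hKC := complete_subset_colex m t r ht h1 C hC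
  have hCD := colex_subset_D m t r hr ht h2 C hC
  refine le_antisymm ?_ (lagrangian_mono hKC)
  refine csSup_le (lag_nonempty C) ?_
  rintro y ⟨x, hx, rfl⟩
  obtain ⟨z, hz, hEq⟩ := merge_lemma t r hr ht x hx
  calc lagEval C x ≤ lagEval (completeG (t - 1) r ∪
        ((Finset.Icc 1 (t - 2)).powersetCard (r - 1)).image (insert t)) x :=
      lagEval_mono hCD hx.1
    _ = lagEval (completeG (t - 1) r) z := hEq
    _ ≤ lagrangian (completeG (t - 1) r) :=
      le_csSup (lag_bdd (completeG (t - 1) r)) ⟨z, hz, rfl⟩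
end

section
/- Let G = (V,E) be an r-graph on vertex set [n] and let x = (x_1,…,x_n) be an optimal weighting for G whose nonzero weights are exactly x_1,…,x_k (k ≤ n) and whose number of nonzero entries is minimal among all optimal weightings for G. Then for every pair {i,j} of distinct indices in [k]: (a) λ(E_i, x) = λ(E_j, x) = r·λ(G), and (b) there is an edge of G containing both i and j. -/
noncomputable def upd (x : ℕ → ℝ) (i j : ℕ) (t : ℝ) : ℕ → ℝ :=
  fun a => if a = i then x i + t else if a = j then x j - t else x a

lemma lagEval_nbhd (E : Finset (Finset ℕ)) (i : ℕ) (x : ℕ → ℝ) :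
    lagEval (nbhd E i) x = ∑ e ∈ E.filter (fun e => i ∈ e), ∏ a ∈ e.erase i, x a := by
  unfold lagEval nbhd
  rw [Finset.sum_image]
  intro e1 h1 e2 h2 h
  simp only [Finset.mem_coe, Finset.mem_filter] at h1 h2
  beta_reduce at h
  rw [← Finset.insert_erase h1.2, ← Finset.insert_erase h2.2, h]

lemma lagEval_nbhd2 (E : Finset (Finset ℕ)) (i j : ℕ) (hij : i ≠ j) (x : ℕ → ℝ) :
    lagEval (nbhd2 E i j) x
      = ∑ e ∈ E.filter (fun e => i ∈ e ∧ j ∈ e), ∏ a ∈ (e.erase i).erase j, x a := by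
  unfold lagEval nbhd2
  rw [Finset.sum_image]
  intro e1 h1 e2 h2 h
  simp only [Finset.mem_coe, Finset.mem_filter] at h1 h2
  beta_reduce at h
  have j1 : j ∈ e1.erase i := Finset.mem_erase.mpr ⟨Ne.symm hij, h1.2.2⟩
  have j2 : j ∈ e2.erase i := Finset.mem_erase.mpr ⟨Ne.symm hij, h2.2.2⟩
  rw [← Finset.insert_erase h1.2.1, ← Finset.insert_erase j1,
      ← Finset.insert_erase h2.2.1, ← Finset.insert_erase j2, h]

lemma prod_upd (x : ℕ → ℝ) (t : ℝ) (i j : ℕ) (hij : i ≠ j) (e : Finset ℕ) :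
    ∏ a ∈ e, upd x i j t a =
      ∏ a ∈ e, x a
        + t * (if i ∈ e then ∏ a ∈ e.erase i, x a else 0)
        - t * (if j ∈ e then ∏ a ∈ e.erase j, x a else 0)
        - t^2 * (if i ∈ e ∧ j ∈ e then ∏ a ∈ (e.erase i).erase j, x a else 0) := by
  have hui : upd x i j t i = x i + t := by simp [upd]
  have huj : upd x i j t j = x j - t := by simp [upd, Ne.symm hij]
  by_cases hi : i ∈ e <;> by_cases hj : j ∈ e
  · -- both
    have hje : j ∈ e.erase i := Finset.mem_erase.mpr ⟨Ne.symm hij, hj⟩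
    have hie : i ∈ e.erase j := Finset.mem_erase.mpr ⟨hij, hi⟩
    have hcong : ∏ a ∈ (e.erase i).erase j, upd x i j t a
        = ∏ a ∈ (e.erase i).erase j, x a := by
      apply Finset.prod_congr rfl
      intro a ha
      have h1 : a ≠ j := (Finset.mem_erase.mp ha).1
      have h2 : a ≠ i := (Finset.mem_erase.mp (Finset.mem_erase.mp ha).2).1
      simp [upd, h1, h2]
    have hswap : (e.erase j).erase i = (e.erase i).erase j := by
      rw [Finset.erase_right_comm]
    rw [← Finset.mul_prod_erase e _ hi, ← Finset.mul_prod_erase (e.erase i) _ hje,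
        hcong, hui, huj]
    simp only [hi, hj, and_self, if_true]
    rw [← Finset.mul_prod_erase e x hi, ← Finset.mul_prod_erase (e.erase i) x hje,
        ← Finset.mul_prod_erase (e.erase j) x hie, hswap]
    ring
  · -- i only
    have hcong : ∏ a ∈ e.erase i, upd x i j t a = ∏ a ∈ e.erase i, x a := by
      apply Finset.prod_congr rfl
      intro a ha
      have h1 : a ≠ i := (Finset.mem_erase.mp ha).1
      have h2 : a ≠ j := fun h => hj (h ▸ (Finset.mem_erase.mp ha).2)
      simp [upd, h1, h2]
    rw [← Finset.mul_prod_erase e _ hi, hcong, hui, ← Finset.mul_prod_erase e x hi]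
    simp only [hi, hj, if_pos, if_neg, and_false, if_false]
    ring
  · -- j only
    have hcong : ∏ a ∈ e.erase j, upd x i j t a = ∏ a ∈ e.erase j, x a := by
      apply Finset.prod_congr rfl
      intro a ha
      have h1 : a ≠ j := (Finset.mem_erase.mp ha).1
      have h2 : a ≠ i := fun h => hi (h ▸ (Finset.mem_erase.mp ha).2)
      simp [upd, h1, h2]
    rw [← Finset.mul_prod_erase e _ hj, hcong, huj, ← Finset.mul_prod_erase e x hj]
    simp only [hi, hj, if_pos, if_neg, false_and, if_false]
    ring
  · -- neither
    have hcong : ∏ a ∈ e, upd x i j t a = ∏ a ∈ e, x a := by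
      apply Finset.prod_congr rfl
      intro a ha
      have h1 : a ≠ i := fun h => hi (h ▸ ha)
      have h2 : a ≠ j := fun h => hj (h ▸ ha)
      simp [upd, h1, h2]
    simp only [hi, hj, if_neg, false_and, if_false, hcong]
    ring

lemma lagEval_upd (E : Finset (Finset ℕ)) (x : ℕ → ℝ) (t : ℝ) (i j : ℕ) (hij : i ≠ j) :
    lagEval E (upd x i j t) =
      lagEval E x + t * (lagEval (nbhd E i) x - lagEval (nbhd E j) x)
        - t^2 * lagEval (nbhd2 E i j) x := by
  rw [lagEval_nbhd, lagEval_nbhd, lagEval_nbhd2 E i j hij]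
  show ∑ e ∈ E, ∏ a ∈ e, upd x i j t a = _
  rw [Finset.sum_congr rfl (fun e _ => prod_upd x t i j hij e)]
  rw [Finset.sum_sub_distrib, Finset.sum_sub_distrib, Finset.sum_add_distrib,
      ← Finset.mul_sum, ← Finset.mul_sum, ← Finset.mul_sum,
      ← Finset.sum_filter, ← Finset.sum_filter, ← Finset.sum_filter]
  show _ = lagEval E x + _ - _
  unfold lagEval
  ring





lemma sum_x_nbhd {r n : ℕ} {E : Finset (Finset ℕ)} (hG : IsRGraphOn r n E) (x : ℕ → ℝ) :
    ∑ a ∈ Finset.Icc 1 n, x a * lagEval (nbhd E a) x = r * lagEval E x := by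
  have hstep : ∀ a : ℕ, x a * lagEval (nbhd E a) x
      = ∑ e ∈ E, if a ∈ e then ∏ b ∈ e, x b else 0 := by
    intro a
    rw [lagEval_nbhd, Finset.mul_sum, Finset.sum_filter]
    apply Finset.sum_congr rfl
    intro e _
    by_cases h : a ∈ e
    · simp only [h, if_true]
      exact Finset.mul_prod_erase e x h
    · simp [h]
  rw [Finset.sum_congr rfl (fun a _ => hstep a), Finset.sum_comm]
  unfold lagEval
  rw [Finset.mul_sum]
  apply Finset.sum_congr rfl
  intro e he
  rw [← Finset.sum_filter, Finset.sum_const, Finset.filter_mem_eq_inter,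
      Finset.inter_eq_right.mpr (hG e he).2, (hG e he).1, nsmul_eq_mul]

lemma lagEval_le_card (E : Finset (Finset ℕ)) (y : ℕ → ℝ) (hy : Feasible y) :
    lagEval E y ≤ E.card := by
  obtain ⟨hnn, S, hS0, hS1⟩ := hy
  have hle1 : ∀ a, y a ≤ 1 := by
    intro a
    by_cases h : a ∈ S
    · calc y a ≤ ∑ i ∈ S, y i := Finset.single_le_sum (fun i _ => hnn i) h
      _ = 1 := hS1
    · rw [hS0 a h]; norm_num
  calc lagEval E y ≤ ∑ e ∈ E, (1:ℝ) := by
        apply Finset.sum_le_sum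
        intro e _
        exact Finset.prod_le_one (fun a _ => hnn a) (fun a _ => hle1 a)
    _ = E.card := by simp

lemma lagEval_le_lagrangian {n : ℕ} (E : Finset (Finset ℕ)) (y : ℕ → ℝ)
    (hy : FeasibleOn n y) : lagEval E y ≤ lagrangian E := by
  apply le_csSup
  · refine ⟨E.card, ?_⟩
    rintro z ⟨w, hw, rfl⟩
    exact lagEval_le_card E w hw
  · exact ⟨y, ⟨hy.1, ⟨Finset.Icc 1 n, hy.2.1, hy.2.2⟩⟩, rfl⟩

lemma lagEval_nonneg (E : Finset (Finset ℕ)) (x : ℕ → ℝ) (hx : ∀ a, 0 ≤ x a) :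
    0 ≤ lagEval E x :=
  Finset.sum_nonneg fun e _ => Finset.prod_nonneg fun a _ => hx a

lemma upd_feasible {n : ℕ} (x : ℕ → ℝ) (i j : ℕ) (t : ℝ) (hij : i ≠ j)
    (hi : i ∈ Finset.Icc 1 n) (hj : j ∈ Finset.Icc 1 n)
    (hfeas : FeasibleOn n x) (h1 : 0 ≤ x i + t) (h2 : 0 ≤ x j - t) :
    FeasibleOn n (upd x i j t) := by
  obtain ⟨hnn, h0, hsum⟩ := hfeas
  refine ⟨?_, ?_, ?_⟩
  · intro a
    unfold upd
    by_cases ha : a = i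
    · simp [ha, h1]
    · by_cases hb : a = j
      · simp [ha, hb, h2, Ne.symm hij]
      · simp [ha, hb, hnn a]
  · intro a ha
    have hai : a ≠ i := fun h => ha (h ▸ hi)
    have haj : a ≠ j := fun h => ha (h ▸ hj)
    simp [upd, hai, haj, h0 a ha]
  · have : ∀ a ∈ Finset.Icc 1 n, upd x i j t a
        = x a + (if a = i then t else 0) - (if a = j then t else 0) := by
      intro a _
      unfold upd
      by_cases ha : a = i
      · simp [ha, hij]
      · by_cases hb : a = j
        · simp [ha, hb, Ne.symm hij]
        · simp [ha, hb]
    rw [Finset.sum_congr rfl this, Finset.sum_sub_distrib, Finset.sum_add_distrib,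
        Finset.sum_ite_eq' _ i, Finset.sum_ite_eq' _ j, if_pos hi, if_pos hj, hsum]
    ring

/-- Frankl–Rödl: if `x` is an optimal weighting for an r-graph `G` on `[n]` whose
nonzero weights are exactly `x_1, …, x_k` and whose number of nonzero entries is
minimal among all optimal weightings, then for all distinct `i, j ∈ [k]`:
(a) λ(E_i, x) = λ(E_j, x) = r·λ(G), and (b) some edge of `G` contains both `i` and `j`. -/
theorem stmt7 (r n k : ℕ) (E : Finset (Finset ℕ)) (hG : IsRGraphOn r n E)
    (hk : k ≤ n) (x : ℕ → ℝ)
    (hfeas : FeasibleOn n x)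
    (hopt : lagEval E x = lagrangian E)
    (hsupp : ∀ i : ℕ, x i ≠ 0 ↔ (1 ≤ i ∧ i ≤ k))
    (hmin : ∀ y : ℕ → ℝ, FeasibleOn n y → lagEval E y = lagrangian E →
      ((Finset.Icc 1 n).filter fun i => x i ≠ 0).card ≤
        ((Finset.Icc 1 n).filter fun i => y i ≠ 0).card)
    (i j : ℕ) (hi : i ∈ Finset.Icc 1 k) (hj : j ∈ Finset.Icc 1 k) (hij : i ≠ j) :
    lagEval (nbhd E i) x = r * lagrangian E ∧
      lagEval (nbhd E j) x = r * lagrangian E ∧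
      ∃ e ∈ E, i ∈ e ∧ j ∈ e := by
  have hx_pos : ∀ a ∈ Finset.Icc 1 k, 0 < x a := by
    intro a ha
    rw [Finset.mem_Icc] at ha
    exact lt_of_le_of_ne (hfeas.1 a) (Ne.symm ((hsupp a).mpr ha))
  have hIcc : ∀ a ∈ Finset.Icc 1 k, a ∈ Finset.Icc 1 n := by
    intro a ha
    rw [Finset.mem_Icc] at *
    omega
  -- Lemma A : all partial derivatives over the support are ≤ each other, hence equal.
  have hle : ∀ a b, a ∈ Finset.Icc 1 k → b ∈ Finset.Icc 1 k → a ≠ b →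
      lagEval (nbhd E a) x ≤ lagEval (nbhd E b) x := by
    intro a b ha hb hab
    by_contra hlt
    push_neg at hlt
    set Q := lagEval (nbhd2 E a b) x with hQdef
    have hQ0 : 0 ≤ Q := lagEval_nonneg _ _ hfeas.1
    set d := lagEval (nbhd E a) x - lagEval (nbhd E b) x with hddef
    have hd : 0 < d := by simp only [hddef]; linarith
    set t := min (x b) (d / (Q + 1)) with htdef
    have htpos : 0 < t := lt_min (hx_pos b hb) (div_pos hd (by linarith))
    have ht1 : t ≤ x b := min_le_left _ _
    have ht2 : t * Q < d := by
      have h3 : t ≤ d / (Q + 1) := min_le_right _ _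
      have h4 : t * (Q + 1) ≤ d := by
        rw [← le_div_iff₀ (by linarith)]
        exact h3
      nlinarith
    have hyf : FeasibleOn n (upd x a b t) :=
      upd_feasible x a b t hab (hIcc a ha) (hIcc b hb) hfeas
        (by have := hfeas.1 a; linarith) (by linarith)
    have hle2 := lagEval_le_lagrangian E _ hyf
    rw [lagEval_upd E x t a b hab, hopt] at hle2
    nlinarith
  have heq : ∀ a b, a ∈ Finset.Icc 1 k → b ∈ Finset.Icc 1 k → a ≠ b →
      lagEval (nbhd E a) x = lagEval (nbhd E b) x := fun a b ha hb hab =>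
    le_antisymm (hle a b ha hb hab) (hle b a hb ha (Ne.symm hab))
  -- common value equals r λ(G)
  have hLi : lagEval (nbhd E i) x = r * lagrangian E := by
    have hs := sum_x_nbhd hG x
    have hs2 : ∑ a ∈ Finset.Icc 1 n, x a * lagEval (nbhd E a) x
        = ∑ a ∈ Finset.Icc 1 n, x a * lagEval (nbhd E i) x := by
      apply Finset.sum_congr rfl
      intro a _
      by_cases hxa : x a = 0
      · rw [hxa]; ring
      · have hak : a ∈ Finset.Icc 1 k := Finset.mem_Icc.mpr ((hsupp a).mp hxa)
        by_cases hai : a = i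
        · rw [hai]
        · rw [heq a i hak hi hai]
    rw [hs2, ← Finset.sum_mul, hfeas.2.2, one_mul, hopt] at hs
    linarith
  refine ⟨hLi, by rw [← heq i j hi hj hij]; exact hLi, ?_⟩
  -- Part (b)
  by_contra hne
  have hfilt : E.filter (fun e => i ∈ e ∧ j ∈ e) = ∅ := by
    rw [Finset.filter_eq_empty_iff]
    intro e he h2
    exact hne ⟨e, he, h2⟩
  have hQ : lagEval (nbhd2 E i j) x = 0 := by
    rw [lagEval_nbhd2 E i j hij, hfilt, Finset.sum_empty]
  have hyf : FeasibleOn n (upd x i j (x j)) :=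
    upd_feasible x i j (x j) hij (hIcc i hi) (hIcc j hj) hfeas
      (by have := hfeas.1 i; have := hfeas.1 j; linarith) (by linarith)
  have hyval : lagEval E (upd x i j (x j)) = lagrangian E := by
    rw [lagEval_upd E x (x j) i j hij, hQ, heq i j hi hj hij, hopt]
    ring
  have hcard := hmin _ hyf hyval
  have hsub : (Finset.Icc 1 n).filter (fun a => upd x i j (x j) a ≠ 0)
      ⊆ ((Finset.Icc 1 n).filter fun a => x a ≠ 0).erase j := by
    intro a ha
    rw [Finset.mem_filter] at ha
    obtain ⟨haI, hay⟩ := ha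
    have haj : a ≠ j := by
      intro h
      apply hay
      simp [h, upd, Ne.symm hij]
    refine Finset.mem_erase.mpr ⟨haj, Finset.mem_filter.mpr ⟨haI, ?_⟩⟩
    by_cases hai : a = i
    · rw [hai]
      exact ne_of_gt (hx_pos i hi)
    · intro h
      apply hay
      simp [upd, hai, haj, h]
  have hjm : j ∈ (Finset.Icc 1 n).filter fun a => x a ≠ 0 :=
    Finset.mem_filter.mpr ⟨hIcc j hj, ne_of_gt (hx_pos j hj)⟩
  have h1 := Finset.card_le_card hsub
  rw [Finset.card_erase_of_mem hjm] at h1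
  have h2 : 0 < ((Finset.Icc 1 n).filter fun a => x a ≠ 0).card :=
    Finset.card_pos.mpr ⟨j, hjm⟩
  omega
end
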